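/- arXiv:1905.11322 — 5 statements merged into one kernel-verified Lean document; each statement's English description precedes it below -/
import Mathlib

section
/- Let α be the real root of x^3 - x - 1 and a = α(α+1)/(3α^2 - 1). Then the minimal polynomial of 2a over ℤ is 23x^3 - 46x^2 + 24x - 8. -/
open Polynomial

theorem minpoly_two_a (α a : ℝ) (hα : α ^ 3 - α - 1 = 0)
    (ha : a = α * (α + 1) / (3 * α ^ 2 - 1)) :
    Polynomial.aeval (2 * a) (23 * X ^ 3 - 46 * X ^ 2 + 24 * X - 8 : ℤ[X]) = 0 ∧
    C (23 : ℚ) * minpoly ℚ (2 * a) = 23 * X ^ 3 - 46 * X ^ 2 + 24 * X - 8 := by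
  have ht : 3 * α ^ 2 - 1 ≠ 0 := by
    intro h
    have h2 : α ^ 2 = 1 / 3 := by linarith
    have h3 : α ^ 3 = α * α ^ 2 := by ring
    rw [h2] at h3
    have h4 : α = -3/2 := by rw [h3] at hα; linarith
    rw [h4] at h2; norm_num at h2
  have key : 23 * (2 * a) ^ 3 - 46 * (2 * a) ^ 2 + 24 * (2 * a) - 8 = 0 := by
    rw [ha]
    field_simp
    rw [sub_eq_zero, div_eq_iff (pow_ne_zero 3 (by rw [mul_comm]; exact ht))]
    linear_combination (-152*α^3 - 120*α^2 - 40*α - 8) * hα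
  constructor
  · simp only [map_sub, map_add, map_mul, map_pow, aeval_X, map_ofNat]
    push_cast
    linear_combination key
  · set q : ℚ[X] := X ^ 3 - C 2 * X ^ 2 + C (24/23) * X - C (8/23) with hq
    have hqmonic : q.Monic := by
      unfold q; monicity!
    have hqdeg : q.natDegree = 3 := by
      unfold q; compute_degree!
    have haev : aeval (2 * a) q = 0 := by
      simp only [hq, map_sub, map_add, map_mul, map_pow, aeval_X, aeval_C, eq_ratCast]
      push_cast
      linear_combination key / 23
    have hirr : Irreducible q := by
      rw [hqmonic.irreducible_iff_roots_eq_zero_of_degree_le_three (by omega) (by omega)]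
      rw [Multiset.eq_zero_iff_forall_notMem]
      intro r hr
      rw [mem_roots (hqmonic.ne_zero)] at hr
      have hq_r : (23:ℚ) * r ^ 3 - 46 * r ^ 2 + 24 * r - 8 = 0 := by
        have h := hr
        simp only [IsRoot, hq, eval_sub, eval_add, eval_mul, eval_pow, eval_X, eval_C] at h
        linear_combination 23 * h
      have hroot : aeval r (23 * X ^ 3 - 46 * X ^ 2 + 24 * X - 8 : ℤ[X]) = 0 := by
        simp only [map_sub, map_add, map_mul, map_pow, aeval_X, map_ofNat]
        push_cast
        linear_combination hq_r
      have hc0 : (23 * X ^ 3 - 46 * X ^ 2 + 24 * X - 8 : ℤ[X]).coeff 0 = -8 := by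
        simp [coeff_sub, coeff_add, coeff_ofNat_mul, coeff_X_pow, coeff_X]
      have hdeg : (23 * X ^ 3 - 46 * X ^ 2 + 24 * X - 8 : ℤ[X]).natDegree = 3 := by
        compute_degree!
      have hlead : (23 * X ^ 3 - 46 * X ^ 2 + 24 * X - 8 : ℤ[X]).leadingCoeff = 23 := by
        rw [leadingCoeff, hdeg]
        simp [coeff_sub, coeff_add, coeff_ofNat_mul, coeff_X_pow, coeff_X]
      have hn8' : IsFractionRing.num ℤ r ∣ 8 := by
        have h := num_dvd_of_is_root hroot
        rw [hc0] at h
        exact (dvd_neg).mp h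
      have hd23' : (IsFractionRing.den ℤ r : ℤ) ∣ 23 := by
        have h := den_dvd_of_is_root hroot
        rwa [hlead] at h
      obtain ⟨n, d, hd0, hnd, hn8, hd23⟩ :
          ∃ n d : ℤ, d ≠ 0 ∧ r = (n : ℚ) / (d : ℚ) ∧ n ∣ 8 ∧ d ∣ 23 := by
        refine ⟨IsFractionRing.num ℤ r, (IsFractionRing.den ℤ r : ℤ), ?_, ?_, hn8', hd23'⟩
        · exact nonZeroDivisors.coe_ne_zero _
        · have h := IsFractionRing.mk'_num_den' ℤ r
          rw [eq_intCast, eq_intCast] at h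
          exact h.symm
      have hdQ : (d : ℚ) ≠ 0 := Int.cast_ne_zero.mpr hd0
      have hn' : (n : ℚ) = r * d := by rw [hnd]; field_simp
      have hEq : 23 * n ^ 3 - 46 * n ^ 2 * d + 24 * n * d ^ 2 - 8 * d ^ 3 = 0 := by
        have hQ : (23 * (n:ℚ) ^ 3 - 46 * n ^ 2 * d + 24 * n * d ^ 2 - 8 * d ^ 3 : ℚ) = 0 := by
          linear_combination ((d:ℚ))^3 * hq_r +
            (23 * ((n:ℚ)^2 + n * r * d + r^2 * d^2) - 46 * d * ((n:ℚ) + r * d) + 24 * d^2) * hn'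
        exact_mod_cast hQ
      have hnb1 : n ≤ 8 := Int.le_of_dvd (by norm_num) hn8
      have hnb2 : -8 ≤ n := by
        have h := Int.le_of_dvd (by norm_num : (0:ℤ) < 8) ((neg_dvd).mpr hn8)
        omega
      have hdb1 : d ≤ 23 := Int.le_of_dvd (by norm_num) hd23
      have hdb2 : -23 ≤ d := by
        have h := Int.le_of_dvd (by norm_num : (0:ℤ) < 23) ((neg_dvd).mpr hd23)
        omega
      have hd4 : d = 1 ∨ d = -1 ∨ d = 23 ∨ d = -23 := by
        interval_cases d <;> revert hd23 <;> decide
      have hn4 : n = 1 ∨ n = -1 ∨ n = 2 ∨ n = -2 ∨ n = 4 ∨ n = -4 ∨ n = 8 ∨ n = -8 := by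
        interval_cases n <;> revert hn8 <;> decide
      rcases hd4 with rfl | rfl | rfl | rfl <;>
        rcases hn4 with rfl | rfl | rfl | rfl | rfl | rfl | rfl | rfl <;>
        norm_num at hEq
    have hmin : minpoly ℚ (2 * a) = q :=
      (minpoly.eq_of_irreducible_of_monic hirr haev hqmonic).symm
    rw [hmin, hq]
    have hexp : (C (23:ℚ)) * (X ^ 3 - C 2 * X ^ 2 + C (24/23) * X - C (8/23))
        = C (23:ℚ) * X ^ 3 - C (46:ℚ) * X ^ 2 + C (24:ℚ) * X - C (8:ℚ) := by
      rw [mul_sub, mul_add, mul_sub, ← mul_assoc, ← mul_assoc, ← C_mul, ← C_mul, ← C_mul]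
      norm_num
    rw [hexp]
    simp only [map_ofNat]
end

section
/- Let α be the real root of x^3 - x - 1 and a = α(α+1)/(3α^2 - 1). Then the minimal polynomial of a over ℤ is 23x^3 - 23x^2 + 6x - 1; in particular the norm of a from ℚ(α) to ℚ is 1/23. -/
open Polynomial

lemma no_rat_root (q : ℚ) : 23 * q ^ 3 - 23 * q ^ 2 + 6 * q - 1 ≠ 0 := by
  intro h
  set n : ℤ := q.num with hn
  set d : ℤ := (q.den : ℤ) with hdd
  have hdpos : 0 < d := by positivity
  have hnum : (n : ℚ) = q * d := by
    rw [hdd]; push_cast [hn]; rw [Rat.mul_den_eq_num]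
  have key : 23 * n ^ 3 - 23 * n ^ 2 * d + 6 * n * d ^ 2 - d ^ 3 = 0 := by
    have : (23 * (n:ℚ) ^ 3 - 23 * (n:ℚ) ^ 2 * d + 6 * (n:ℚ) * d ^ 2 - (d:ℚ) ^ 3) = 0 := by
      linear_combination (d:ℚ)^3 * h +
        (23*(n:ℚ)^2 + 23*(n:ℚ)*(q*d) + 23*(q*(d:ℚ))^2 - 23*(d:ℚ)*(n:ℚ) - 23*(d:ℚ)*(q*d) + 6*(d:ℚ)^2) * hnum
    exact_mod_cast this
  have hcop : IsCoprime n d := by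
    rw [Int.isCoprime_iff_gcd_eq_one]
    exact q.reduced
  have hn_dvd : n ∣ d ^ 3 := ⟨23 * n ^ 2 - 23 * n * d + 6 * d ^ 2, by linarith [key]⟩
  have hn1 : n ∣ 1 := (hcop.pow_right (n := 3)).dvd_of_dvd_mul_right (by simpa using hn_dvd)
  have hd_dvd : d ∣ 23 * n ^ 3 := ⟨23 * n ^ 2 - 6 * n * d + d ^ 2, by linarith [key]⟩
  have hd23 : d ∣ 23 := (hcop.symm.pow_right (n := 3)).dvd_of_dvd_mul_right
    (by simpa [mul_comm] using hd_dvd)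
  clear_value n d
  have hdle : d ≤ 23 := Int.le_of_dvd (by norm_num) hd23
  have hn' : n = 1 ∨ n = -1 := by
    rcases Int.isUnit_iff.mp (isUnit_of_dvd_one hn1) with h | h <;> simp [h]
  rcases hn' with rfl | rfl <;> interval_cases d <;> norm_num at key

theorem minpoly_a (α a : ℝ) (hα : α ^ 3 - α - 1 = 0)
    (ha : a = α * (α + 1) / (3 * α ^ 2 - 1)) :
    (Polynomial.aeval a (23 * X ^ 3 - 23 * X ^ 2 + 6 * X - 1 : ℤ[X]) = 0 ∧
      C (23 : ℚ) * minpoly ℚ a = 23 * X ^ 3 - 23 * X ^ 2 + 6 * X - 1) ∧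
    (-1 : ℚ) ^ (minpoly ℚ a).natDegree * (minpoly ℚ a).coeff 0 = 1 / 23 := by
  have hne : 3 * α ^ 2 - 1 ≠ 0 := by
    intro h
    have h23 : (23 : ℝ) = 0 := by
      linear_combination (18*α - 27) * hα + (4 - 6*α^2 + 9*α) * h
    norm_num at h23
  have hroot : 23 * a ^ 3 - 23 * a ^ 2 + 6 * a - 1 = 0 := by
    have : 23 * a ^ 3 - 23 * a ^ 2 + 6 * a - 1 =
        ((-19*α^3 - 15*α^2 - 5*α - 1) * (α^3 - α - 1)) / (3*α^2 - 1)^3 := by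
      rw [ha]; field_simp; rw [div_sub_one (pow_ne_zero 3 (by rwa [mul_comm]))]; ring
    rw [this, hα, mul_zero, zero_div]
  -- the candidate minimal polynomial
  set p : ℚ[X] := X ^ 3 - X ^ 2 + C (6/23) * X - C (1/23) with hp
  have hpmonic : p.Monic := by rw [hp]; monicity!
  have hdeg : p.natDegree = 3 := by rw [hp]; compute_degree!
  have haeval : aeval a p = 0 := by
    rw [hp]
    simp only [map_sub, map_add, map_mul, map_pow, aeval_X, aeval_C]
    have h6 : (algebraMap ℚ ℝ) (6/23) = 6/23 := by norm_num
    have h1 : (algebraMap ℚ ℝ) (1/23) = 1/23 := by norm_num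
    rw [h6, h1]
    linarith [hroot]
  have hroots : p.roots = 0 := by
    rw [Multiset.eq_zero_iff_forall_notMem]
    intro q hq
    rw [mem_roots hpmonic.ne_zero, IsRoot.def, hp] at hq
    simp only [eval_sub, eval_add, eval_mul, eval_pow, eval_X, eval_C] at hq
    exact no_rat_root q (by linarith [hq])
  have hirr : Irreducible p :=
    (irreducible_iff_roots_eq_zero_of_degree_le_three (by omega) (by omega)).mpr hroots
  have hmin : minpoly ℚ a = p := (minpoly.eq_of_irreducible_of_monic hirr haeval hpmonic).symm
  refine ⟨⟨?_, ?_⟩, ?_⟩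
  · simp only [map_sub, map_add, map_mul, map_pow, aeval_X, map_ofNat, map_one]
    linarith [hroot]
  · rw [hmin, hp]
    have h23 : ((23 : ℚ[X])) = C 23 := (map_ofNat C 23).symm
    have h6 : ((6 : ℚ[X])) = C 6 := (map_ofNat C 6).symm
    have h1 : ((1 : ℚ[X])) = C 1 := C_1.symm
    rw [h23, h6, h1, mul_sub, mul_add, mul_sub, ← mul_assoc, ← C_mul, ← C_mul]
    norm_num
  · rw [hmin, hp]
    have hc : (X ^ 3 - X ^ 2 + C (6/23 : ℚ) * X - C (1/23)).coeff 0 = -(1/23) := by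
      simp [coeff_one]
    rw [← hp, hdeg, hp, hc]
    norm_num
end

section
/- Let d ≥ 2 be a nonsquare integer, (X₁, Y₁) the fundamental positive solution of X² - dY² = ±4, ρ = (X₁ + Y₁√d)/2, ϱ = (X₁ - Y₁√d)/2, and X_k = ρ^k + ϱ^k. Then for all k ≥ 1, ρ^k / α² ≤ X_k ≤ 2ρ^k, where α is the real root of x^3 - x - 1. -/
set_option maxHeartbeats 1600000 in
theorem pell4_X_bounds (d : ℤ) (hd : 2 ≤ d) (hds : ¬ IsSquare d)
    (X₁ Y₁ : ℤ) (hX : 0 < X₁) (hY : 0 < Y₁) (ε : ℤ) (hε : ε = 4 ∨ ε = -4)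
    (hpell : X₁ ^ 2 - d * Y₁ ^ 2 = ε)
    (hfund : ∀ x y : ℤ, 0 < x → 0 < y → x ^ 2 - d * y ^ 2 = ε →
      (X₁ : ℝ) + Y₁ * Real.sqrt d ≤ x + y * Real.sqrt d)
    (α ρ τ : ℝ) (hα : α ^ 3 - α - 1 = 0)
    (hρ : ρ = ((X₁ : ℝ) + Y₁ * Real.sqrt d) / 2) (hτ : τ = ((X₁ : ℝ) - Y₁ * Real.sqrt d) / 2) :
    ∀ k : ℕ, 1 ≤ k →
      ρ ^ k / α ^ 2 ≤ ρ ^ k + τ ^ k ∧ ρ ^ k + τ ^ k ≤ 2 * ρ ^ k := by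
  have hd0 : (0:ℝ) ≤ (d:ℝ) := by exact_mod_cast (by omega : (0:ℤ) ≤ d)
  set s := Real.sqrt (d:ℝ) with hsdef
  have hs0 : 0 ≤ s := Real.sqrt_nonneg _
  have hs2 : s ^ 2 = (d:ℝ) := Real.sq_sqrt hd0
  have hpellR : (X₁:ℝ) ^ 2 - (d:ℝ) * (Y₁:ℝ) ^ 2 = (ε:ℝ) := by exact_mod_cast hpell
  have hρτ : ρ * τ = (ε:ℝ) / 4 := by
    rw [hρ, hτ]
    linear_combination (-(Y₁:ℝ) ^ 2 / 4) * hs2 + (1/4) * hpellR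
  have hs5 : Real.sqrt 5 ^ 2 = 5 := Real.sq_sqrt (by norm_num)
  have hs5n : 0 ≤ Real.sqrt 5 := Real.sqrt_nonneg 5
  have h25 : 2 ≤ Real.sqrt 5 := by nlinarith
  have hX1 : (1:ℝ) ≤ (X₁:ℝ) := by exact_mod_cast hX
  have hY1 : (1:ℝ) ≤ (Y₁:ℝ) := by exact_mod_cast hY
  have hρφ : (1 + Real.sqrt 5) / 2 ≤ ρ := by
    have hd4 : d ≠ 4 := by rintro rfl; exact hds ⟨2, by norm_num⟩
    have hcase : d = 2 ∨ d = 3 ∨ 5 ≤ d := by omega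
    rcases hcase with rfl | rfl | hd5
    · -- d = 2
      have hs2' : s ^ 2 = 2 := by rw [hs2]; norm_num
      have hs1 : 1 ≤ s := by nlinarith
      have heven : Even X₁ := by
        have h2 : Even (X₁ ^ 2) := by
          rcases hε with rfl | rfl
          · exact ⟨2 + Y₁ ^ 2, by linarith⟩
          · exact ⟨-2 + Y₁ ^ 2, by linarith⟩
        exact (Int.even_pow.mp h2).1
      obtain ⟨m, hm⟩ := heven
      have hX2 : (2:ℝ) ≤ (X₁:ℝ) := by exact_mod_cast (by omega : (2:ℤ) ≤ X₁)
      rw [hρ]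
      nlinarith [mul_nonneg (by linarith : (0:ℝ) ≤ (Y₁:ℝ) - 1) hs0]
    · -- d = 3
      have hs3 : s ^ 2 = 3 := by rw [hs2]; norm_num
      have hs1 : 1 ≤ s := by nlinarith
      obtain ⟨n, hn1, hnp⟩ : ∃ n : ℤ, 1 ≤ n ∧ X₁ ^ 2 - 3 * n = ε :=
        ⟨Y₁ ^ 2, by nlinarith, hpell⟩
      have hX4 : 4 ≤ X₁ := by
        by_contra h
        push_neg at h
        have : X₁ = 1 ∨ X₁ = 2 ∨ X₁ = 3 := by omega
        rcases this with rfl | rfl | rfl <;> norm_num at hnp <;> omega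
      have hX4' : (4:ℝ) ≤ (X₁:ℝ) := by exact_mod_cast hX4
      rw [hρ]
      nlinarith [mul_nonneg (by linarith : (0:ℝ) ≤ (Y₁:ℝ) - 1) hs0]
    · -- 5 ≤ d
      have h5d : Real.sqrt 5 ≤ s := Real.sqrt_le_sqrt (by exact_mod_cast hd5)
      rw [hρ]
      nlinarith [mul_nonneg (by linarith : (0:ℝ) ≤ (Y₁:ℝ) - 1) hs0,
        mul_nonneg (by linarith : (0:ℝ) ≤ (Y₁:ℝ) - 1) (le_trans hs5n h5d)]
  have hρ1 : 1 < ρ := by nlinarith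
  have hα1 : 1 < α := by
    by_contra h
    push_neg at h
    have h1 : 0 ≤ (1 - α) * (1 + α) ^ 2 := mul_nonneg (by linarith) (sq_nonneg _)
    have h2 : α ^ 2 ≤ 0 := by nlinarith [h1, hα]
    have h3 : α ^ 2 = 0 := le_antisymm h2 (sq_nonneg α)
    have h4 : α = 0 := by
      have := sq_eq_zero_iff.mp h3
      exact this
    rw [h4] at hα; norm_num at hα
  have hαφ : α ≤ (1 + Real.sqrt 5) / 2 := by
    set c : ℝ := (1 + Real.sqrt 5) / 2 with hc
    have hc2 : c ^ 2 = c + 1 := by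
      rw [hc]; linear_combination hs5 / 4
    have hc1 : (3:ℝ) / 2 ≤ c := by rw [hc]; linarith
    by_contra h
    push_neg at h
    have hpos : 0 ≤ (α - c) * (α ^ 2 + α * c + c ^ 2 - 1) :=
      mul_nonneg (by linarith) (by nlinarith)
    nlinarith [hpos, hc2, hc1, hα]
  have hαρ : α + 1 ≤ ρ ^ 2 := by nlinarith
  have hα2 : 1 < α ^ 2 := by nlinarith
  intro k hk
  have hk0 : k ≠ 0 := by omega
  have hρk : ρ ≤ ρ ^ k := le_self_pow₀ (le_of_lt hρ1) hk0
  have hρkpos : (0:ℝ) < ρ ^ k := by positivity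
  have hρk1 : 1 < ρ ^ k := lt_of_lt_of_le hρ1 hρk
  have hPT : ρ ^ k * τ ^ k = 1 ∨ ρ ^ k * τ ^ k = -1 := by
    rw [← mul_pow]
    rcases hε with rfl | rfl
    · have h1 : ρ * τ = 1 := by rw [hρτ]; norm_num
      left; rw [h1, one_pow]
    · have h1 : ρ * τ = -1 := by rw [hρτ]; norm_num
      rw [h1]
      rcases Nat.even_or_odd k with he | ho
      · left; exact he.neg_one_pow
      · right; exact ho.neg_one_pow
  have hP2 : α + 1 ≤ ρ ^ k * ρ ^ k := by nlinarith
  constructor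
  · rw [div_le_iff₀ (by positivity)]
    rcases hPT with h | h
    · nlinarith [h, hα2, hρkpos]
    · have key : (ρ ^ k * ρ ^ k - (α + 1)) * (α ^ 2 - 1) ≥ 0 :=
        mul_nonneg (by linarith) (by linarith)
      nlinarith [key, h, hα, hρkpos]
  · rcases hPT with h | h <;> nlinarith [h, hρkpos, hρk1]
end

section
/- If (k, n, m) is a solution of x_k = P(n) + P(m) with 3 ≤ m < n, where x_k comes from the Pell equation x² - dy² = ±1 with fundamental solution generating δ = x₁ + y₁√d, then (n-2)·log α < k·log δ < (n+3)·log α + log 2; in particular |n - k·(log δ)/(log α)| < 6. -/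
def padovan : ℕ → ℕ
  | 0 => 0
  | 1 => 1
  | 2 => 1
  | n + 3 => padovan (n + 1) + padovan n

lemma pad_lb (α : ℝ) (h3 : α ^ 3 = α + 1) (h1 : 1 ≤ α) (h2 : α ≤ 1.4) :
    ∀ j : ℕ, α ^ j ≤ (padovan (j + 3) : ℝ) := by
  intro j
  induction j using Nat.strong_induction_on with
  | _ j ih =>
    match j, ih with
    | 0, _ => simp [padovan]
    | 1, _ =>
      have : padovan 4 = 2 := rfl
      rw [this]; push_cast; nlinarith
    | 2, _ =>
      have : padovan 5 = 2 := rfl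
      rw [this]; push_cast; nlinarith
    | (j+3), ih =>
      have hA := ih (j+1) (by omega)
      have hB := ih j (by omega)
      have hpd : padovan (j + 3 + 3) = padovan (j + 1 + 3) + padovan (j + 3) := rfl
      have hpow : α ^ (j + 3) = α ^ (j + 1) + α ^ j := by
        have : α ^ (j + 3) = α ^ j * α ^ 3 := by ring
        rw [this, h3]; ring
      rw [hpd, hpow]; push_cast; linarith

lemma pad_ub (α : ℝ) (h3 : α ^ 3 = α + 1) (h1 : 1 ≤ α) :
    ∀ j : ℕ, (padovan (j + 1) : ℝ) ≤ α ^ j := by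
  intro j
  induction j using Nat.strong_induction_on with
  | _ j ih =>
    match j, ih with
    | 0, _ => simp [padovan]
    | 1, _ =>
      have : padovan 2 = 1 := rfl
      rw [this]; push_cast; nlinarith
    | 2, _ =>
      have : padovan 3 = 1 := rfl
      rw [this]; push_cast; nlinarith
    | (j+3), ih =>
      have hA : (padovan (j + 2) : ℝ) ≤ α ^ (j + 1) := ih (j+1) (by omega)
      have hB : (padovan (j + 1) : ℝ) ≤ α ^ j := ih j (by omega)
      have hpd : padovan (j + 3 + 1) = padovan (j + 2) + padovan (j + 1) := rfl
      have hpow : α ^ (j + 3) = α ^ (j + 1) + α ^ j := by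
        have : α ^ (j + 3) = α ^ j * α ^ 3 := by ring
        rw [this, h3]; ring
      rw [hpd, hpow]; push_cast; linarith

set_option maxHeartbeats 1000000 in
theorem pell_padovan_k_n_ineq (α δ σ : ℝ) (hα : α ^ 3 - α - 1 = 0)
    (hδ : 1 + Real.sqrt 2 ≤ δ) (hσ : δ * σ = 1 ∨ δ * σ = -1)
    (k n m : ℕ) (hk : 1 ≤ k) (hm : 3 ≤ m) (hmn : m < n)
    (heq : (δ ^ k + σ ^ k) / 2 = (padovan n + padovan m : ℝ)) :
    ((n : ℝ) - 2) * Real.log α < k * Real.log δ ∧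
    (k : ℝ) * Real.log δ < ((n : ℝ) + 3) * Real.log α + Real.log 2 ∧
    |(n : ℝ) - k * Real.log δ / Real.log α| < 6 := by
  have h3 : α ^ 3 = α + 1 := by linarith
  have h13 : (1.3 : ℝ) < α := by nlinarith [sq_nonneg (α + 0.65)]
  have h14 : α < 1.4 := by nlinarith [sq_nonneg (α + 0.7)]
  have hα1 : (1:ℝ) < α := by linarith
  have hα0 : (0:ℝ) < α := by linarith
  have hsq2 : (1:ℝ) < Real.sqrt 2 := by
    nlinarith [Real.sq_sqrt (by norm_num : (0:ℝ) ≤ 2), Real.sqrt_nonneg 2]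
  have hδ1 : (1:ℝ) < δ := by linarith
  have hδ0 : (0:ℝ) < δ := by linarith
  have hσabs : |σ| ≤ 1 := by
    have habs : |δ| * |σ| = 1 := by
      rw [← abs_mul]; rcases hσ with h | h <;> rw [h] <;> norm_num
    rw [abs_of_pos hδ0] at habs
    nlinarith [abs_nonneg σ]
  have hσk : |σ ^ k| ≤ 1 := by
    rw [abs_pow]; exact pow_le_one₀ (abs_nonneg σ) hσabs
  have hσk' := abs_le.mp hσk
  obtain ⟨a, rfl⟩ : ∃ a, n = a + 4 := ⟨n - 4, by omega⟩
  obtain ⟨c, rfl⟩ : ∃ c, m = c + 3 := ⟨m - 3, by omega⟩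
  set Pn : ℝ := (padovan (a + 4) : ℝ) with hPn
  set Pm : ℝ := (padovan (c + 3) : ℝ) with hPm
  have hxk : δ ^ k + σ ^ k = 2 * (Pn + Pm) := by
    rw [hPn, hPm]; push_cast; push_cast at heq; linarith
  have hPn_lb : α ^ (a + 1) ≤ Pn := by
    have := pad_lb α h3 hα1.le h14.le (a + 1)
    rwa [show a + 1 + 3 = a + 4 from rfl] at this
  have hPn_ub : Pn ≤ α ^ (a + 3) := by
    have := pad_ub α h3 hα1.le (a + 3)
    rwa [show a + 3 + 1 = a + 4 from rfl] at this
  have hPm_lb : α ^ c ≤ Pm := pad_lb α h3 hα1.le h14.le c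
  have hPm_ub : Pm ≤ α ^ (c + 2) := by
    have := pad_ub α h3 hα1.le (c + 2)
    rwa [show c + 2 + 1 = c + 3 from rfl] at this
  have hc_le : c + 2 ≤ a + 3 := by omega
  have hPm_ub' : Pm ≤ α ^ (a + 3) :=
    hPm_ub.trans (pow_le_pow_right₀ hα1.le hc_le)
  have hPm1 : (1:ℝ) ≤ Pm := le_trans (one_le_pow₀ hα1.le) hPm_lb
  -- lower bound: α ^ (a+2) < δ ^ k
  have hlow : α ^ (a + 2) < δ ^ k := by
    have e1 : α ^ (a + 2) = α * α ^ (a + 1) := by ring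
    have hmul : α * α ^ (a + 1) < 2 * α ^ (a + 1) := by
      nlinarith [pow_pos hα0 (a + 1)]
    linarith [hσk'.2]
  -- upper bound: δ ^ k < 2 * α ^ (a + 7)
  have hup : δ ^ k < 2 * α ^ (a + 7) := by
    have e2 : α ^ (a + 3) = α ^ a * α ^ 3 := by ring
    have e3 : α ^ (a + 7) = α ^ (a + 3) * α ^ 4 := by ring
    have h4 : α ^ 4 = α ^ 2 + α := by
      have h' : α ^ 4 = α * α ^ 3 := by ring
      rw [h', h3]; ring
    have ha1 : (1:ℝ) ≤ α ^ a := one_le_pow₀ hα1.le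
    have hge : (2:ℝ) < α ^ (a + 3) := by
      have h6 : 1 * (α + 1) ≤ α ^ a * (α + 1) :=
        mul_le_mul_of_nonneg_right ha1 (by linarith)
      rw [e2, h3]; linarith
    have hT : (0:ℝ) < α ^ (a + 3) := pow_pos hα0 _
    have hq : (2.9:ℝ) < α ^ 2 + α := by
      have h7 : α * 1.3 < α * α := mul_lt_mul_of_pos_left h13 hα0
      nlinarith [h7]
    have h5 : α ^ (a + 3) * 2.9 < α ^ (a + 3) * (α ^ 2 + α) :=
      mul_lt_mul_of_pos_left hq hT
    have key : 4 * α ^ (a + 3) + 1 < 2 * α ^ (a + 7) := by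
      rw [e3, h4]; linarith
    linarith [hσk'.1]
  have hlogα : 0 < Real.log α := Real.log_pos hα1
  have L1 : ((a : ℝ) + 4 - 2) * Real.log α < k * Real.log δ := by
    have h := Real.log_lt_log (pow_pos hα0 (a + 2)) hlow
    rw [Real.log_pow, Real.log_pow] at h
    push_cast at h ⊢
    linarith
  have L2 : (k : ℝ) * Real.log δ < ((a : ℝ) + 4 + 3) * Real.log α + Real.log 2 := by
    have h := Real.log_lt_log (pow_pos hδ0 k) hup
    rw [Real.log_mul (by norm_num) (by positivity), Real.log_pow, Real.log_pow] at h
    push_cast at h ⊢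
    linarith
  have hlog2 : Real.log 2 < 3 * Real.log α := by
    have h2lt : (2:ℝ) < α ^ 3 := by nlinarith
    have h := Real.log_lt_log (by norm_num) h2lt
    rw [Real.log_pow] at h
    push_cast at h
    linarith
  refine ⟨by push_cast; linarith, by push_cast; linarith, ?_⟩
  have hr1 : ((a : ℝ) + 4) - 2 < k * Real.log δ / Real.log α := by
    rw [lt_div_iff₀ hlogα]; linarith
  have hr2 : (k : ℝ) * Real.log δ / Real.log α < ((a : ℝ) + 4) + 6 := by
    rw [div_lt_iff₀ hlogα]; nlinarith
  rw [abs_lt]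
  push_cast
  constructor <;> linarith
end

section
/- If (k, n, m) is a solution of x_k = P(n) + P(m) with 3 ≤ m < n and n ≥ 4, where x_k = (δ^k + σ^k)/2 comes from the Pell equation x² - dy² = ±1, then k < n. -/
lemma padovan_le_add_two : ∀ n, padovan n ≤ padovan (n + 2)
  | 0 => by decide
  | j + 1 => by
      show padovan (j + 1) ≤ padovan (j + 3)
      rw [show padovan (j + 3) = padovan (j + 1) + padovan j from rfl]
      omega

lemma padovan_mono_succ : ∀ n, 1 ≤ n → padovan n ≤ padovan (n + 1)
  | 1, _ => by decide
  | 2, _ => by decide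
  | (j + 3), _ => by
      show padovan (j + 3) ≤ padovan (j + 4)
      have h1 : padovan (j + 3) = padovan (j + 1) + padovan j := rfl
      have h2 : padovan (j + 4) = padovan (j + 2) + padovan (j + 1) := rfl
      have := padovan_le_add_two j
      omega

lemma padovan_mono {m n : ℕ} (hm : 1 ≤ m) (hmn : m ≤ n) : padovan m ≤ padovan n := by
  induction n, hmn using Nat.le_induction with
  | base => exact le_rfl
  | succ n hn ih => exact ih.trans (padovan_mono_succ n (hm.trans hn))

lemma padovan_le_sqrt_two_pow : ∀ n, (padovan n : ℝ) ≤ Real.sqrt 2 ^ n := by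
  have hs0 : (0:ℝ) ≤ Real.sqrt 2 := Real.sqrt_nonneg 2
  have hs2 : Real.sqrt 2 ^ 2 = 2 := Real.sq_sqrt (by norm_num)
  have hs1 : (1:ℝ) ≤ Real.sqrt 2 := by nlinarith
  intro n
  induction n using Nat.strong_induction_on with
  | _ n ih =>
    match n with
    | 0 => simp [padovan]
    | 1 => simpa [padovan] using hs1
    | 2 => simp only [padovan, Nat.cast_one]; rw [hs2]; norm_num
    | (j + 3) =>
      have h1 := ih (j + 1) (by omega)
      have h2 := ih j (by omega)
      have hj : Real.sqrt 2 ^ j ≤ Real.sqrt 2 ^ (j + 1) :=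
        pow_le_pow_right₀ hs1 (by omega)
      have hkey : Real.sqrt 2 ^ (j + 3) = 2 * Real.sqrt 2 ^ (j + 1) := by
        rw [show j + 3 = (j + 1) + 2 from rfl, pow_add, hs2]; ring
      have : (padovan (j + 3) : ℝ) = (padovan (j + 1) : ℝ) + (padovan j : ℝ) := by
        rw [show padovan (j + 3) = padovan (j + 1) + padovan j from rfl]; push_cast; ring
      rw [this, hkey]
      linarith

lemma key_ineq : ∀ n, 4 ≤ n → 4 * Real.sqrt 2 ^ n + 1 ≤ (1 + Real.sqrt 2) ^ n := by
  have hs0 : (0:ℝ) ≤ Real.sqrt 2 := Real.sqrt_nonneg 2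
  have hs2 : Real.sqrt 2 ^ 2 = 2 := Real.sq_sqrt (by norm_num)
  have hs1 : (1:ℝ) ≤ Real.sqrt 2 := by nlinarith
  intro n hn
  induction n, hn using Nat.le_induction with
  | base =>
    have h4 : (1 + Real.sqrt 2) ^ 4 = 17 + 12 * Real.sqrt 2 := by ring_nf; nlinarith
    have h4' : Real.sqrt 2 ^ 4 = 4 := by
      rw [show (4:ℕ) = 2 + 2 from rfl, pow_add, hs2]; norm_num
    rw [h4, h4']
    nlinarith
  | succ n hn ih =>
    have hp : (0:ℝ) ≤ (1 + Real.sqrt 2) ^ n := by positivity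
    have step : Real.sqrt 2 * (1 + Real.sqrt 2) ^ n ≤ (1 + Real.sqrt 2) ^ (n + 1) := by
      rw [pow_succ]
      nlinarith
    have : 4 * Real.sqrt 2 ^ (n + 1) + 1 ≤ Real.sqrt 2 * (4 * Real.sqrt 2 ^ n + 1) := by
      rw [pow_succ]
      nlinarith [pow_nonneg hs0 n]
    nlinarith

theorem pell_padovan_k_lt_n (α δ σ : ℝ) (hα : α ^ 3 - α - 1 = 0)
    (hδ : 1 + Real.sqrt 2 ≤ δ) (hσ : δ * σ = 1 ∨ δ * σ = -1)
    (k n m : ℕ) (hk : 1 ≤ k) (hm : 3 ≤ m) (hmn : m < n) (hn : 4 ≤ n)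
    (heq : (δ ^ k + σ ^ k) / 2 = (padovan n + padovan m : ℝ)) :
    k < n := by
  by_contra hcon
  push_neg at hcon
  have hs0 : (0:ℝ) ≤ Real.sqrt 2 := Real.sqrt_nonneg 2
  have hs2 : Real.sqrt 2 ^ 2 = 2 := Real.sq_sqrt (by norm_num)
  have hs1 : (1:ℝ) ≤ Real.sqrt 2 := by nlinarith
  have hδ1 : (1:ℝ) < δ := by linarith
  have hδ0 : (0:ℝ) < δ := by linarith
  -- |σ| < 1
  have habs : |σ| * δ = 1 := by
    rcases hσ with h | h
    · have : |δ * σ| = 1 := by rw [h]; simp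
      rw [abs_mul, abs_of_pos hδ0] at this; linarith [this]
    · have : |δ * σ| = 1 := by rw [h]; simp
      rw [abs_mul, abs_of_pos hδ0] at this; linarith [this]
  have hσlt : |σ| < 1 := by
    nlinarith [abs_nonneg σ]
  -- σ^k > -1
  have hσk : -1 < σ ^ k := by
    have h1 : |σ ^ k| ≤ |σ| ^ 1 := by
      rw [abs_pow]
      exact pow_le_pow_of_le_one (abs_nonneg σ) hσlt.le hk
    have h2 : -|σ ^ k| ≤ σ ^ k := neg_abs_le _
    simp only [pow_one] at h1
    linarith
  -- δ^n ≤ δ^k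
  have hδkn : δ ^ n ≤ δ ^ k := pow_le_pow_right₀ hδ1.le hcon
  have hδn : (1 + Real.sqrt 2) ^ n ≤ δ ^ n := pow_le_pow_left₀ (by linarith) hδ n
  -- padovan bounds
  have hpm : padovan m ≤ padovan n := padovan_mono (by omega) hmn.le
  have hpn : (padovan n : ℝ) ≤ Real.sqrt 2 ^ n := padovan_le_sqrt_two_pow n
  have hkey := key_ineq n hn
  have hpmr : (padovan m : ℝ) ≤ (padovan n : ℝ) := by exact_mod_cast hpm
  have : δ ^ k + σ ^ k > δ ^ n - 1 := by linarith
  nlinarith [this, heq]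
end
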